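/- Let f : {±1}^t → [-1,1] be any function and α ∈ (0,1]. If p is sampled uniformly at random from [-α, α] and, conditionally on p, x_1, …, x_t ∈ {±1} are sampled independently each with mean p, then E[ r(α,p)·f(x)·Σ_{i∈[t]} (x_i − p) + 2·(|p| − f(x)·p) ] = α, where r(α,p) = (α² − p²)/(1 − p²) if α² ≠ 1 and r(α,p) = 1 if α² = 1, and the expectation is over both p and x = (x_1,…,x_t). -/

import Mathlib

open MeasureTheory ENNReal

noncomputable section

/-- The ±1 real value of a Boolean sign. -/
def sgn (b : Bool) : ℝ := if b then 1 else -1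

/-- The discrete measure on a finite type with mass function `f`. -/
def discMeasure {α : Type*} [Fintype α] [MeasurableSpace α] (f : α → ℝ) : Measure α :=
  ∑ a : α, ENNReal.ofReal (f a) • Measure.dirac a

/-- Product distribution on `{±1}^d` (encoded as `Fin d → Bool`) with mean vector `p`. -/
def prodSigns (d : ℕ) (p : Fin d → ℝ) : Measure (Fin d → Bool) :=
  discMeasure fun x => ∏ j, (1 + sgn (x j) * p j) / 2

/-- A sample for indexed mean estimation: a vector in `{±1}^d` together with an index. -/
abbrev EstZ (d : ℕ) := (Fin d → Bool) × Fin d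

/-- A sample for indexed classification: `(x, j, y)`. -/
abbrev ClassZ (d : ℕ) := (Fin d → Bool) × Fin d × Bool

/-- Task distribution `P_X(p) ⊗ Det(j)` for indexed mean estimation. -/
def estDist (d : ℕ) (p : Fin d → ℝ) (j : Fin d) : Measure (EstZ d) :=
  (prodSigns d p).prod (Measure.dirac j)

/-- Distribution `R_{p,j} ⊗ Det(j)` of triples `(x, j, y)` for indexed classification:
`w` is drawn from the product distribution with mean vector `p`, `y` is a uniform sign,
`x_l = w_l` for `l ≠ j` and `x_j = w_j · y`. -/
def classDist (d : ℕ) (p : Fin d → ℝ) (j : Fin d) : Measure (ClassZ d) :=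
  Measure.map
    (fun wy : (Fin d → Bool) × Bool =>
      ((fun l => if l = j then (wy.1 l == wy.2) else wy.1 l), j, wy.2))
    ((prodSigns d p).prod (discMeasure fun _ : Bool => 1 / 2))

/-- Squared-error loss for indexed mean estimation. -/
def lossMean (pj phat : ℝ) : ℝ := (phat - pj) ^ 2 / 4

/-- Loss for indexed sign estimation; the estimate `s : Bool` encodes a sign in `{±1}`. -/
def lossSign (pj : ℝ) (s : Bool) : ℝ := if sgn s = Real.sign pj then 0 else |pj|

/-- Excess classification error of the classifier `f` on a distribution `P` over
samples `(x, j, y)`, where `f` is applied to coordinate `j` of `x`. -/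
def lossClass {d : ℕ} (P : Measure (ClassZ d)) (f : Bool → Bool) : ℝ :=
  (P {s | f (s.1 s.2.1) ≠ s.2.2}).toReal -
    ⨅ g : Bool → Bool, (P {s | g (s.1 s.2.1) ≠ s.2.2}).toReal

/-- Expected average loss of a multitask learning algorithm `M` on the tuple of tasks `P`,
with `n` i.i.d. samples per task. -/
def MultitaskError {Z H : Type*} [MeasurableSpace Z] [MeasurableSpace H] {t n : ℕ}
    (P : Fin t → Measure Z) (loss : Fin t → H → ℝ)
    (M : (Fin t → Fin n → Z) → Measure (Fin t → H)) : ℝ :=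
  ∫ S, (∫ g, (∑ i, loss i (g i)) / (t : ℝ) ∂(M S))
    ∂(Measure.pi fun i => Measure.pi fun _ : Fin n => P i)

/-- Joint output distribution of a billboard algorithm: the curator publishes a
representation drawn from `MBB S`, and each person `i` computes `Mpers (S i) h`. -/
def billboard {Z R H : Type*} [MeasurableSpace Z] [MeasurableSpace R] [MeasurableSpace H]
    {t n : ℕ} (MBB : (Fin t → Fin n → Z) → Measure R)
    (Mpers : (Fin n → Z) → R → Measure H) :
    (Fin t → Fin n → Z) → Measure (Fin t → H) :=
  fun S => (MBB S).bind fun h => Measure.pi fun i => Mpers (S i) h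

/-- Expected test-task loss of a metalearning pair `(Mmeta, Mpers)` on a fixed
`(t+1)`-tuple of tasks `P`, with `n` samples per training task and `npers`
personalization samples from the test task `P (Fin.last t)`. -/
def MetaError {Z R H : Type*} [MeasurableSpace Z] [MeasurableSpace R] [MeasurableSpace H]
    {t n npers : ℕ} (P : Fin (t + 1) → Measure Z) (loss : H → ℝ)
    (Mmeta : (Fin t → Fin n → Z) → Measure R)
    (Mpers : (Fin npers → Z) → R → Measure H) : ℝ :=
  ∫ S, (∫ T, (∫ g, loss g ∂((Mmeta S).bind fun h => Mpers T h))
      ∂(Measure.pi fun _ : Fin npers => P (Fin.last t)))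
    ∂(Measure.pi fun i : Fin t => Measure.pi fun _ : Fin n => P i.castSucc)

/-- Two indexed families differ in at most one entry. -/
def Neighbor {ι Z : Type*} (A B : ι → Z) : Prop := ∃ i, ∀ j, j ≠ i → A j = B j

/-- `(ε,δ)`-differential privacy with respect to changing one person's entire dataset. -/
def IsDP {D O : Type*} [MeasurableSpace O] {t : ℕ}
    (M : (Fin t → D) → Measure O) (ε δ : ℝ) : Prop :=
  ∀ S S' : Fin t → D, Neighbor S S' → ∀ E : Set O, MeasurableSet E →
    M S E ≤ ENNReal.ofReal (Real.exp ε) * M S' E + ENNReal.ofReal δ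

/-- Rényi divergence of order `a` between `P` and `Q`. -/
def renyiDiv {O : Type*} [MeasurableSpace O] (a : ℝ) (P Q : Measure O) : ℝ :=
  (a - 1)⁻¹ * Real.log (∫⁻ x, P.rnDeriv Q x ^ a ∂Q).toReal

/-- `P` has all Rényi divergences of order `a ∈ (1,∞)` with respect to `Q`
bounded by `ρ·a`. -/
def RenyiBounded {O : Type*} [MeasurableSpace O] (P Q : Measure O) (ρ : ℝ) : Prop :=
  P ≪ Q ∧ ∀ a : ℝ, 1 < a → renyiDiv a P Q ≤ ρ * a

/-- `ρ`-zero-concentrated differential privacy. -/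
def IsZCDP {D O : Type*} [MeasurableSpace O] {t : ℕ}
    (M : (Fin t → D) → Measure O) (ρ : ℝ) : Prop :=
  ∀ S S' : Fin t → D, Neighbor S S' → RenyiBounded (M S) (M S') ρ

/-- `(ε,δ)`-joint differential privacy: the joint distribution of all outputs except
person `i`'s is `(ε,δ)`-indistinguishable when person `i`'s dataset changes in one sample. -/
def IsJDP {Z H : Type*} [MeasurableSpace H] {t n : ℕ}
    (M : (Fin t → Fin n → Z) → Measure (Fin t → H)) (ε δ : ℝ) : Prop :=
  ∀ i : Fin t, ∀ S S' : Fin t → Fin n → Z,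
    (∀ j, j ≠ i → S j = S' j) → Neighbor (S i) (S' i) →
    ∀ E : Set ({j : Fin t // j ≠ i} → H), MeasurableSet E →
      Measure.map (fun g (j : {j : Fin t // j ≠ i}) => g j.1) (M S) E
        ≤ ENNReal.ofReal (Real.exp ε)
            * Measure.map (fun g (j : {j : Fin t // j ≠ i}) => g j.1) (M S') E
          + ENNReal.ofReal δ

/-- `ρ`-joint zero-concentrated differential privacy. -/
def IsJCDP {Z H : Type*} [MeasurableSpace H] {t n : ℕ}
    (M : (Fin t → Fin n → Z) → Measure (Fin t → H)) (ρ : ℝ) : Prop :=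
  ∀ i : Fin t, ∀ S S' : Fin t → Fin n → Z,
    (∀ j, j ≠ i → S j = S' j) → Neighbor (S i) (S' i) →
    RenyiBounded (Measure.map (fun g (j : {j : Fin t // j ≠ i}) => g j.1) (M S))
      (Measure.map (fun g (j : {j : Fin t // j ≠ i}) => g j.1) (M S')) ρ

/-- `ρ`-1-out-of-t zero-concentrated differential privacy: for distinct people `i ≠ k`,
person `k`'s output is `ρ`-zCDP-indistinguishable when person `i`'s dataset changes in
one sample. -/
def IsOneOutZCDP {Z H : Type*} [MeasurableSpace H] {t n : ℕ}
    (M : (Fin t → Fin n → Z) → Measure (Fin t → H)) (ρ : ℝ) : Prop :=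
  ∀ i k : Fin t, i ≠ k → ∀ S S' : Fin t → Fin n → Z,
    (∀ j, j ≠ i → S j = S' j) → Neighbor (S i) (S' i) →
    RenyiBounded (Measure.map (fun g => g k) (M S)) (Measure.map (fun g => g k) (M S')) ρ

/-- Uniform probability measure on the real interval `[a, b]`. -/
def unifIcc (a b : ℝ) : Measure ℝ :=
  (ENNReal.ofReal (b - a))⁻¹ • volume.restrict (Set.Icc a b)

/-- The reweighting factor in the generalized fingerprinting lemma. -/
def fpr (α p : ℝ) : ℝ := if α ^ 2 = 1 then 1 else (α ^ 2 - p ^ 2) / (1 - p ^ 2)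


/-- the generalized fingerprinting lemma. For `f : {±1}^t → [-1,1]` and
`α ∈ (0,1]`, with `p` uniform on `[-α,α]` and `x₁,…,x_t` i.i.d. signs with mean `p`,
`E[ r(α,p)·f(x)·Σᵢ(xᵢ − p) + 2(|p| − f(x)·p) ] = α`. The inner expectation over `x` is
written as an explicit sum against the product mass function. -/

def gfun (t : ℕ) (f : (Fin t → Bool) → ℝ) (p : ℝ) : ℝ :=
  ∑ x : Fin t → Bool, (∏ i, (1 + sgn (x i) * p) / 2) * f x

def gder (t : ℕ) (f : (Fin t → Bool) → ℝ) (p : ℝ) : ℝ :=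
  ∑ x : Fin t → Bool,
    (∑ i, (∏ j ∈ Finset.univ.erase i, (1 + sgn (x j) * p) / 2) * (sgn (x i) / 2)) * f x

lemma mass_sum (t : ℕ) (p : ℝ) :
    ∑ x : Fin t → Bool, ∏ i, (1 + sgn (x i) * p) / 2 = 1 := by
  rw [← Fintype.prod_sum (fun (i : Fin t) (b : Bool) => (1 + sgn b * p) / 2)]
  have h1 : (∑ b : Bool, (1 + sgn b * p) / 2) = 1 := by
    rw [Fintype.sum_bool]
    norm_num [sgn]
    ring
  rw [h1, Finset.prod_const_one]

lemma hasDerivAt_gfun (t : ℕ) (f : (Fin t → Bool) → ℝ) (p : ℝ) :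
    HasDerivAt (gfun t f) (gder t f p) p := by
  apply HasDerivAt.fun_sum
  intro x _
  have hprod : HasDerivAt (fun p : ℝ => ∏ i, (1 + sgn (x i) * p) / 2)
      (∑ i, (∏ j ∈ Finset.univ.erase i, (1 + sgn (x j) * p) / 2) • (sgn (x i) / 2)) p := by
    apply HasDerivAt.fun_finsetProd
    intro i _
    simpa using (((hasDerivAt_id p).const_mul (sgn (x i))).const_add 1).div_const 2
  simpa [smul_eq_mul] using hprod.mul_const (f x)

lemma hasDerivAt_mul_abs (p : ℝ) : HasDerivAt (fun q : ℝ => q * |q|) (2 * |p|) p := by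
  rcases lt_trichotomy p 0 with h | rfl | h
  · have hev : (fun q : ℝ => -(q * q)) =ᶠ[nhds p] fun q : ℝ => q * |q| := by
      filter_upwards [eventually_lt_nhds h] with q hq
      rw [abs_of_neg hq]; ring
    have hd : HasDerivAt (fun q : ℝ => -(q * q)) (2 * |p|) p := by
      have := ((hasDerivAt_id p).mul (hasDerivAt_id p)).neg
      refine this.congr_deriv ?_
      rw [abs_of_neg h]; simp; ring
    exact hd.congr_of_eventuallyEq hev.symm
  · rw [hasDerivAt_iff_tendsto_slope]
    have hs : (slope (fun q : ℝ => q * |q|) 0) =ᶠ[nhdsWithin 0 {(0:ℝ)}ᶜ] fun q => |q| := by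
      filter_upwards [self_mem_nhdsWithin] with q hq
      have hq0 : q ≠ 0 := hq
      rw [slope_def_field]
      simp only [abs_zero, mul_zero, sub_zero]
      rw [mul_comm, mul_div_assoc, div_self hq0, mul_one]
    rw [Filter.tendsto_congr' hs]
    have : Filter.Tendsto (fun q : ℝ => |q|) (nhds 0) (nhds (2 * |(0:ℝ)|)) := by
      simpa using continuous_abs.tendsto (0:ℝ)
    exact this.mono_left nhdsWithin_le_nhds
  · have hev : (fun q : ℝ => q * q) =ᶠ[nhds p] fun q : ℝ => q * |q| := by
      filter_upwards [eventually_gt_nhds h] with q hq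
      rw [abs_of_pos hq]
    have hd : HasDerivAt (fun q : ℝ => q * q) (2 * |p|) p := by
      have := (hasDerivAt_id p).mul (hasDerivAt_id p)
      refine this.congr_deriv ?_
      rw [abs_of_pos h]; simp; ring
    exact hd.congr_of_eventuallyEq hev.symm

lemma continuous_gfun (t : ℕ) (f : (Fin t → Bool) → ℝ) : Continuous (gfun t f) := by
  apply continuous_finset_sum
  intro x _
  exact (continuous_finset_prod _ (fun i _ => by fun_prop)).mul continuous_const

lemma continuous_gder (t : ℕ) (f : (Fin t → Bool) → ℝ) : Continuous (gder t f) := by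
  apply continuous_finset_sum
  intro x _
  exact (continuous_finset_sum _ (fun i _ =>
    (continuous_finset_prod _ (fun j _ => by fun_prop)).mul continuous_const)).mul continuous_const

lemma prod_sum_eq (t : ℕ) (p : ℝ) (x : Fin t → Bool) :
    (∏ i, (1 + sgn (x i) * p) / 2) * (∑ i, (sgn (x i) - p)) =
      (1 - p ^ 2) * (∑ i, (∏ j ∈ Finset.univ.erase i, (1 + sgn (x j) * p) / 2) * (sgn (x i) / 2)) := by
  rw [Finset.mul_sum, Finset.mul_sum]
  refine Finset.sum_congr rfl fun i _ => ?_
  rw [← Finset.mul_prod_erase _ _ (Finset.mem_univ i)]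
  have hs : sgn (x i) * sgn (x i) = 1 := by cases x i <;> simp [sgn]
  set E := ∏ j ∈ Finset.univ.erase i, (1 + sgn (x j) * p) / 2
  linear_combination (E * p / 2) * hs

theorem generalized_fingerprinting_lemma (t : ℕ) (f : (Fin t → Bool) → ℝ)
    (hf : ∀ x, f x ∈ Set.Icc (-1 : ℝ) 1) (α : ℝ) (hα : α ∈ Set.Ioc (0 : ℝ) 1) :
    ∫ p, (∑ x : Fin t → Bool,
        (∏ i, (1 + sgn (x i) * p) / 2) *
          (fpr α p * f x * (∑ i, (sgn (x i) - p)) + 2 * (|p| - f x * p)))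
      ∂(unifIcc (-α) α) = α := by
  obtain ⟨hα0, hα1⟩ := hα
  have hneg : (-α) ≤ α := by linarith
  set D : ℝ → ℝ := fun p => ((α ^ 2 - p ^ 2) * gder t f p - 2 * p * gfun t f p) + 2 * |p|
    with hD
  have hG : ∀ p : ℝ,
      HasDerivAt (fun q => (α ^ 2 - q ^ 2) * gfun t f q + q * |q|) (D p) p := by
    intro p
    have h1 : HasDerivAt (fun q : ℝ => α ^ 2 - q ^ 2) (-(2 * p)) p := by
      simpa using (hasDerivAt_pow 2 p).const_sub (α ^ 2)
    have h2 := (h1.mul (hasDerivAt_gfun t f p)).add (hasDerivAt_mul_abs p)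
    refine h2.congr_deriv ?_
    simp only [hD]
    ring
  have hInt : IntervalIntegrable D volume (-α) α := by
    apply Continuous.intervalIntegrable
    exact (((continuous_const.sub (continuous_pow 2)).mul (continuous_gder t f)).sub
      ((continuous_const.mul continuous_id).mul (continuous_gfun t f))).add
      (continuous_const.mul continuous_abs)
  have hEq : Set.EqOn (fun p => ∑ x : Fin t → Bool,
        (∏ i, (1 + sgn (x i) * p) / 2) *
          (fpr α p * f x * (∑ i, (sgn (x i) - p)) + 2 * (|p| - f x * p))) D
      (Set.uIcc (-α) α) := by
    intro p hp
    rw [Set.uIcc_of_le hneg] at hp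
    obtain ⟨hp1, hp2⟩ := hp
    have hpb : p ^ 2 ≤ α ^ 2 := by nlinarith
    have hfpr : fpr α p * (1 - p ^ 2) = α ^ 2 - p ^ 2 := by
      by_cases h : α ^ 2 = 1
      · rw [fpr, if_pos h, h, one_mul]
      · have hlt : α ^ 2 < 1 := lt_of_le_of_ne (by nlinarith) h
        have hne : 1 - p ^ 2 ≠ 0 := by nlinarith
        rw [fpr, if_neg h, div_mul_cancel₀ _ hne]
    show (∑ x : Fin t → Bool, (∏ i, (1 + sgn (x i) * p) / 2) *
          (fpr α p * f x * (∑ i, (sgn (x i) - p)) + 2 * (|p| - f x * p))) = D p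
    calc (∑ x : Fin t → Bool, (∏ i, (1 + sgn (x i) * p) / 2) *
          (fpr α p * f x * (∑ i, (sgn (x i) - p)) + 2 * (|p| - f x * p)))
        = ∑ x : Fin t → Bool,
            (fpr α p * (1 - p ^ 2) *
              ((∑ i, (∏ j ∈ Finset.univ.erase i, (1 + sgn (x j) * p) / 2) * (sgn (x i) / 2))
                * f x)
            + (2 * |p| * (∏ i, (1 + sgn (x i) * p) / 2)
              - 2 * p * ((∏ i, (1 + sgn (x i) * p) / 2) * f x))) := by
          refine Finset.sum_congr rfl fun x _ => ?_
          linear_combination (fpr α p * f x) * prod_sum_eq t p x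
      _ = fpr α p * (1 - p ^ 2) * gder t f p
            + (2 * |p| * (∑ x : Fin t → Bool, ∏ i, (1 + sgn (x i) * p) / 2)
              - 2 * p * gfun t f p) := by
          rw [Finset.sum_add_distrib, Finset.sum_sub_distrib, ← Finset.mul_sum, ← Finset.mul_sum,
            ← Finset.mul_sum]
          rfl
      _ = D p := by
          rw [mass_sum, hfpr]
          simp only [hD]
          ring
  have h2a : α - -α = 2 * α := by ring
  simp only [unifIcc, integral_smul_measure, h2a]
  rw [show (∫ p, (∑ x : Fin t → Bool,
        (∏ i, (1 + sgn (x i) * p) / 2) *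
          (fpr α p * f x * (∑ i, (sgn (x i) - p)) + 2 * (|p| - f x * p)))
      ∂(volume.restrict (Set.Icc (-α) α)))
      = ∫ p in Set.Icc (-α) α, (∑ x : Fin t → Bool,
        (∏ i, (1 + sgn (x i) * p) / 2) *
          (fpr α p * f x * (∑ i, (sgn (x i) - p)) + 2 * (|p| - f x * p))) from rfl]
  rw [MeasureTheory.integral_Icc_eq_integral_Ioc, ← intervalIntegral.integral_of_le hneg]
  rw [intervalIntegral.integral_congr hEq]
  rw [intervalIntegral.integral_eq_sub_of_hasDerivAt (fun p _ => hG p) hInt]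
  have habs : |α| = α := abs_of_pos hα0
  rw [ENNReal.toReal_inv, ENNReal.toReal_ofReal (by linarith), smul_eq_mul, habs, abs_neg, habs]
  have hα' : α ≠ 0 := ne_of_gt hα0
  field_simp
  ring


end
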